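/- Let H ∈ (0,1), p, c ∈ (0,1). Define L(A) = p·Π_{j=1}^n (p + c(i_j - i_{j-1})^{2H-2}) for A = {i_0 < ... < i_n} ⊂ ℕ, L(∅) = 1. Then for finite sets A ⊆ A' ⊂ ℕ with i ∉ A' the ratio is monotone: L(A ∪ {i})/L(A) ≤ L(A' ∪ {i})/L(A'). -/

import Mathlib

open Finset

/-- The operator L*_{H,p,c} of the paper: for A = {i_0 < i_1 < ⋯ < i_n} ⊂ ℕ,
L(A) = p ∏_{j=1}^n (p + c (i_j - i_{j-1})^{2H-2}), with L(∅) = 1 and L({i}) = p. -/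
noncomputable def Lop (H p c : ℝ) (A : Finset ℕ) : ℝ :=
  if A = ∅ then 1
  else
    p * ∏ j ∈ Finset.range (A.card - 1),
      (p + c * (((A.sort (· ≤ ·)).getD (j + 1) 0 - (A.sort (· ≤ ·)).getD j 0 : ℕ) : ℝ)
        ^ (2 * H - 2))

/-- The ratio L(A ∪ {i})/L(A) is non-decreasing as the set A grows. -/
noncomputable def fE (H p c : ℝ) (d : ℕ) : ℝ := p + c * (d : ℝ) ^ (2 * H - 2)

noncomputable def Ll (H p c : ℝ) : List ℕ → ℝ
  | [] => 1
  | [_] => p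
  | a :: b :: t => fE H p c (b - a) * Ll H p c (b :: t)

noncomputable def Rnb (H p c : ℝ) (i : ℕ) : Option ℕ → Option ℕ → ℝ
  | none, none => p
  | some a, none => fE H p c (i - a)
  | none, some b => fE H p c (b - i)
  | some a, some b => fE H p c (i - a) * fE H p c (b - i) / fE H p c (b - a)

section
variable {H p c : ℝ} (hp1 : 0 < p) (hc1 : 0 < c)
include hp1 hc1

private lemma fE_pos (d : ℕ) : 0 < fE H p c d :=
  add_pos_of_pos_of_nonneg hp1 (mul_nonneg hc1.le (Real.rpow_nonneg (Nat.cast_nonneg d) _))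

private lemma Ll_pos : ∀ l : List ℕ, 0 < Ll H p c l
  | [] => one_pos
  | [_] => hp1
  | a :: b :: t => mul_pos (fE_pos hp1 hc1 _) (Ll_pos (b :: t))

omit hp1 hc1 in
private lemma Ll_eq_prod : ∀ l : List ℕ, l ≠ [] →
    p * ∏ j ∈ Finset.range (l.length - 1),
      (p + c * ((l.getD (j + 1) 0 - l.getD j 0 : ℕ) : ℝ) ^ (2 * H - 2)) = Ll H p c l
  | [], h => absurd rfl h
  | [a], _ => by simp [Ll]
  | a :: b :: t, _ => by
    have ih := Ll_eq_prod (b :: t) (by simp)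
    simp only [List.length_cons, Nat.add_sub_cancel] at ih ⊢
    rw [Finset.prod_range_succ']
    simp only [List.getD_cons_succ, List.getD_cons_zero] at ih ⊢
    rw [show Ll H p c (a :: b :: t) = fE H p c (b - a) * Ll H p c (b :: t) from rfl, ← ih]
    simp only [fE]
    ring

omit hp1 hc1 in
private lemma Lop_eq_Ll (A : Finset ℕ) : Lop H p c A = Ll H p c (A.sort (· ≤ ·)) := by
  rcases eq_or_ne A ∅ with h | h
  · subst h; simp [Lop, Ll]
  · have hlen : (A.sort (· ≤ ·)).length = A.card := Finset.length_sort _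
    have hne : A.sort (· ≤ ·) ≠ [] := by
      intro hnil; rw [hnil] at hlen; exact h (Finset.card_eq_zero.1 hlen.symm)
    rw [Lop, if_neg h, ← Ll_eq_prod _ hne, hlen]
end

section
variable {H p c : ℝ} (hp1 : 0 < p) (hc1 : 0 < c)
include hp1 hc1

private lemma Ll_insert (i : ℕ) : ∀ l : List ℕ, l.Pairwise (· < ·) → i ∉ l →
    Ll H p c (List.orderedInsert (· ≤ ·) i l)
      = Rnb H p c i ((l.filter (fun x => decide (x < i))).getLast?)
          ((l.filter (fun x => decide (i < x))).head?) * Ll H p c l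
  | [], _, _ => by simp [Ll, Rnb]
  | [a], _, hi => by
    have hia : i ≠ a := by simpa using hi
    rcases hia.lt_or_gt with h | h
    · rw [List.orderedInsert, if_pos h.le]
      simp [Ll, Rnb, List.filter, Nat.not_lt.2 h.le, h]
    · rw [List.orderedInsert, if_neg (by exact fun hh => absurd (le_antisymm hh h.le) hia)]
      simp [Ll, Rnb, List.filter, Nat.not_lt.2 h.le, h]
  | a :: b :: t, hs, hi => by
    have hab : a < b := (List.pairwise_cons.1 hs).1 _ (by simp)
    have hst : (b :: t).Pairwise (· < ·) := (List.pairwise_cons.1 hs).2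
    have hia : i ≠ a := by simp at hi; tauto
    rcases hia.lt_or_gt with h | h
    · -- i < a : i goes first
      have hall : ∀ x ∈ a :: b :: t, i < x := fun x hx => by
        rcases List.mem_cons.1 hx with rfl | hx
        · exact h
        · exact h.trans ((List.pairwise_cons.1 hs).1 _ hx)
      rw [List.orderedInsert, if_pos h.le]
      have h1 : (a :: b :: t).filter (fun x => decide (x < i)) = [] :=
        List.filter_eq_nil_iff.2 fun x hx => by simpa using (hall x hx).not_gt
      have h2 : (a :: b :: t).filter (fun x => decide (i < x)) = a :: b :: t :=
        List.filter_eq_self.2 fun x hx => by simpa using hall x hx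
      rw [h1, h2]
      rfl
    · -- a < i
      have hnia : ¬ i ≤ a := by exact fun hh => absurd (le_antisymm hh h.le) hia
      rw [List.orderedInsert, if_neg hnia]
      have hfa : (a :: b :: t).filter (fun x => decide (x < i))
          = a :: (b :: t).filter (fun x => decide (x < i)) := by
        simp [List.filter, h]
      have hfa' : (a :: b :: t).filter (fun x => decide (i < x))
          = (b :: t).filter (fun x => decide (i < x)) := by
        simp [List.filter, Nat.not_lt.2 h.le]
      have hib : i ≠ b := by simp at hi; tauto
      rcases hib.lt_or_gt with h2 | h2
      · -- a < i < b
        rw [List.orderedInsert, if_pos h2.le]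
        have hall : ∀ x ∈ b :: t, i < x := fun x hx => by
          rcases List.mem_cons.1 hx with rfl | hx
          · exact h2
          · exact h2.trans ((List.pairwise_cons.1 hst).1 _ hx)
        have hb1 : (b :: t).filter (fun x => decide (x < i)) = [] :=
          List.filter_eq_nil_iff.2 fun x hx => by simpa using (hall x hx).not_gt
        have hb2 : (b :: t).filter (fun x => decide (i < x)) = b :: t :=
          List.filter_eq_self.2 fun x hx => by simpa using hall x hx
        rw [hfa, hfa', hb1, hb2]
        show fE H p c (i - a) * (fE H p c (b - i) * Ll H p c (b :: t))
          = fE H p c (i - a) * fE H p c (b - i) / fE H p c (b - a)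
            * (fE H p c (b - a) * Ll H p c (b :: t))
        have hne : fE H p c (b - a) ≠ 0 := (fE_pos hp1 hc1 _).ne'
        field_simp
      · -- b < i
        have hnib : ¬ i ≤ b := fun hh => absurd (le_antisymm hh h2.le) hib
        rw [List.orderedInsert, if_neg hnib]
        have hins : List.orderedInsert (· ≤ ·) i (b :: t)
            = b :: List.orderedInsert (· ≤ ·) i t := by
          rw [List.orderedInsert, if_neg hnib]
        have ih := Ll_insert i (b :: t) hst (by simp at hi; simp; tauto)
        rw [hins] at ih
        show fE H p c (b - a) * Ll H p c (b :: List.orderedInsert (· ≤ ·) i t)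
          = _ * (fE H p c (b - a) * Ll H p c (b :: t))
        rw [ih, hfa, hfa']
        have hfb : (b :: t).filter (fun x => decide (x < i))
            = b :: t.filter (fun x => decide (x < i)) := by
          simp [List.filter, h2]
        rw [hfb, List.getLast?_cons_cons, ← hfb]
        ring
end

private lemma sort_filter' (q : ℕ → Prop) [DecidablePred q] (A : Finset ℕ) :
    (A.filter q).sort (· ≤ ·) = (A.sort (· ≤ ·)).filter (fun x => decide (q x)) := by
  refine List.Perm.eq_of_pairwise' (Finset.pairwise_sort _ _)
    ((Finset.pairwise_sort _ _).filter _) ?_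
  rw [← Multiset.coe_eq_coe, Finset.sort_eq, Finset.filter_val]
  conv_lhs => rw [← Finset.sort_eq A (· ≤ ·)]
  exact Multiset.filter_coe _ _

private lemma sort_getLast?_eq_max (A : Finset ℕ) :
    (A.sort (· ≤ ·)).getLast? = A.max := by
  rcases A.eq_empty_or_nonempty with h | h
  · subst h; simp; rfl
  · have hne : A.sort (· ≤ ·) ≠ [] := by
      simp [← List.length_pos_iff_ne_nil, Finset.card_pos, h]
    rw [List.getLast?_eq_getLast_of_ne_nil hne, List.getLast_eq_getElem,
      Finset.sorted_last_eq_max' (h := by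
        simpa using Nat.sub_lt (Finset.card_pos.mpr h) Nat.zero_lt_one),
      ← Finset.coe_max' h]
    rfl

private lemma sort_head?_eq_min (A : Finset ℕ) :
    (A.sort (· ≤ ·)).head? = A.min := by
  rcases A.eq_empty_or_nonempty with h | h
  · subst h; simp; rfl
  · have hne : A.sort (· ≤ ·) ≠ [] := by
      simp [← List.length_pos_iff_ne_nil, Finset.card_pos, h]
    rw [List.head?_eq_head hne, List.head_eq_getElem_zero,
      Finset.sorted_zero_eq_min' (h := by
        simpa [Finset.card_pos] using h), ← Finset.coe_min' h]
    rfl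

private lemma sort_insert_eq (A : Finset ℕ) (i : ℕ) (hi : i ∉ A) :
    (insert i A).sort (· ≤ ·) = List.orderedInsert (· ≤ ·) i (A.sort (· ≤ ·)) := by
  refine List.Perm.eq_of_pairwise' (Finset.pairwise_sort _ _)
    ((Finset.pairwise_sort _ _).orderedInsert i _) ?_
  exact ((Finset.sort_perm_toList _ _).trans
    ((Finset.toList_insert hi).trans
      (((Finset.sort_perm_toList A _).symm.cons i).trans
        (List.perm_orderedInsert _ i _).symm)))

section
variable {H p c : ℝ} (hp1 : 0 < p) (hc1 : 0 < c)
include hp1 hc1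

private lemma ratio_eq (A : Finset ℕ) (i : ℕ) (hi : i ∉ A) :
    Lop H p c (A ∪ {i}) / Lop H p c A
      = Rnb H p c i ((A.filter (· < i)).max) ((A.filter (i < ·)).min) := by
  have hA : A ∪ {i} = insert i A := by rw [Finset.union_comm]; rfl
  rw [hA, Lop_eq_Ll (insert i A), Lop_eq_Ll A, sort_insert_eq A i hi,
    Ll_insert hp1 hc1 i _ (Finset.sortedLT_sort A).pairwise (by simpa using hi),
    mul_div_assoc, div_self (Ll_pos hp1 hc1 _).ne', mul_one]
  congr 1
  · rw [← sort_filter', sort_getLast?_eq_max]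
  · rw [← sort_filter', sort_head?_eq_min]
end

section
variable {H p c : ℝ} (hH2 : H < 1) (hp1 : 0 < p) (hc1 : 0 < c)

private lemma alpha_neg (hH2 : H < 1) : 2 * H - 2 < 0 := by linarith

include hc1 in
private lemma p_le_fE (d : ℕ) : p ≤ fE H p c d :=
  le_add_of_nonneg_right (mul_nonneg hc1.le (Real.rpow_nonneg (Nat.cast_nonneg d) _))

include hH2 hc1 in
private lemma fE_anti {d d' : ℕ} (hd : 0 < d) (h : d ≤ d') : fE H p c d' ≤ fE H p c d := by
  have hr : ((d' : ℝ)) ^ (2 * H - 2) ≤ (d : ℝ) ^ (2 * H - 2) :=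
    Real.rpow_le_rpow_of_nonpos (by exact_mod_cast hd) (by exact_mod_cast h)
      (alpha_neg hH2).le
  have := mul_le_mul_of_nonneg_left hr hc1.le
  unfold fE; linarith

private lemma rpow_diff_anti {α m : ℝ} (hα : α < 0) (hm : 0 ≤ m) :
    AntitoneOn (fun t : ℝ => t ^ α - (t + m) ^ α) (Set.Ici 1) := by
  have hD : ∀ t ∈ interior (Set.Ici (1:ℝ)), HasDerivWithinAt
      (fun t : ℝ => t ^ α - (t + m) ^ α)
      (α * t ^ (α - 1) - α * (t + m) ^ (α - 1) * 1) (interior (Set.Ici 1)) t := by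
    intro t ht
    rw [interior_Ici] at ht
    have ht1 : (1:ℝ) < t := ht
    have h1 : HasDerivAt (fun x : ℝ => x ^ α) (α * t ^ (α - 1)) t :=
      Real.hasDerivAt_rpow_const (Or.inl (by linarith))
    have h2 : HasDerivAt (fun x : ℝ => (x + m) ^ α) (α * (t + m) ^ (α - 1) * 1) t :=
      (Real.hasDerivAt_rpow_const (Or.inl (by nlinarith))).comp t
        ((hasDerivAt_id t).add_const m)
    exact (h1.sub h2).hasDerivWithinAt
  refine antitoneOn_of_hasDerivWithinAt_nonpos (convex_Ici 1) ?_ hD ?_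
  · intro t ht
    have ht1 : (1:ℝ) ≤ t := ht
    have c1 : ContinuousAt (fun x : ℝ => x ^ α) t :=
      continuousAt_id.rpow_const (Or.inl (by intro h; simp only [id_eq] at h; linarith))
    have c2 : ContinuousAt (fun x : ℝ => (x + m) ^ α) t :=
      (continuousAt_id.add continuousAt_const).rpow_const
        (Or.inl (by intro h; change t + m = 0 at h; linarith))
    exact (c1.sub c2).continuousWithinAt
  · intro t ht
    rw [interior_Ici] at ht
    have ht1 : (1:ℝ) < t := ht
    have hr : (t + m) ^ (α - 1) ≤ t ^ (α - 1) :=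
      Real.rpow_le_rpow_of_nonpos (by linarith) (by linarith) (by linarith)
    have := mul_le_mul_of_nonpos_left hr hα.le
    linarith

include hH2 hp1 hc1 in
private lemma key4 {x x' m : ℝ} (hx' : 1 ≤ x') (hx : x' ≤ x) (hm : 1 ≤ m) :
    (p + c * x ^ (2 * H - 2)) * (p + c * (x' + m) ^ (2 * H - 2))
      ≤ (p + c * x' ^ (2 * H - 2)) * (p + c * (x + m) ^ (2 * H - 2)) := by
  set α := 2 * H - 2 with hα_def
  have hα : α < 0 := alpha_neg hH2
  have hA : x ^ α - (x + m) ^ α ≤ x' ^ α - (x' + m) ^ α :=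
    rpow_diff_anti hα (by linarith) (Set.mem_Ici.2 hx') (Set.mem_Ici.2 (hx'.trans hx)) hx
  have hB : x ^ α * (x' + m) ^ α ≤ x' ^ α * (x + m) ^ α := by
    rw [← Real.mul_rpow (by linarith) (by linarith),
      ← Real.mul_rpow (by linarith) (by linarith)]
    refine Real.rpow_le_rpow_of_nonpos (by nlinarith) (by nlinarith) hα.le
  have h1 := mul_le_mul_of_nonneg_left hA (mul_pos hp1 hc1).le
  have h2 := mul_le_mul_of_nonneg_left hB (mul_pos hc1 hc1).le
  nlinarith [h1, h2]

include hH2 hp1 hc1 in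
private lemma ratio_pair_mono {u u' m : ℕ} (hu' : 0 < u') (hu : u' ≤ u) (hm : 0 < m) :
    fE H p c u * fE H p c m / fE H p c (u + m)
      ≤ fE H p c u' * fE H p c m / fE H p c (u' + m) := by
  rw [div_le_div_iff₀ (fE_pos hp1 hc1 _) (fE_pos hp1 hc1 _)]
  have hk : fE H p c u * fE H p c (u' + m) ≤ fE H p c u' * fE H p c (u + m) := by
    have := key4 hH2 hp1 hc1 (x := u) (x' := u') (m := m)
      (by exact_mod_cast hu') (by exact_mod_cast hu) (by exact_mod_cast hm)
    simpa [fE, Nat.cast_add] using this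
  have h3 := mul_le_mul_of_nonneg_right hk (fE_pos (H := H) hp1 hc1 m).le
  linear_combination h3
end

section
variable {H p c : ℝ} (hH2 : H < 1) (hp1 : 0 < p) (hc1 : 0 < c)
include hH2 hp1 hc1

private lemma pair_mono_full {i a a' b b' : ℕ} (h1 : a ≤ a') (h2 : a' < i)
    (h3 : i < b') (h4 : b' ≤ b) :
    fE H p c (i - a) * fE H p c (b - i) / fE H p c (b - a)
      ≤ fE H p c (i - a') * fE H p c (b' - i) / fE H p c (b' - a') := by
  have e1 : b - a = (i - a) + (b - i) := by omega
  have e3 : b' - a' = (i - a') + (b' - i) := by omega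
  have s1 : fE H p c (i - a) * fE H p c (b - i) / fE H p c ((i - a) + (b - i))
      ≤ fE H p c (i - a') * fE H p c (b - i) / fE H p c ((i - a') + (b - i)) :=
    ratio_pair_mono hH2 hp1 hc1 (by omega) (by omega) (by omega)
  have s2 : fE H p c (b - i) * fE H p c (i - a') / fE H p c ((b - i) + (i - a'))
      ≤ fE H p c (b' - i) * fE H p c (i - a') / fE H p c ((b' - i) + (i - a')) :=
    ratio_pair_mono hH2 hp1 hc1 (by omega) (by omega) (by omega)
  rw [e1, e3]
  have e4 : (b - i) + (i - a') = (i - a') + (b - i) := by omega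
  have e5 : (b' - i) + (i - a') = (i - a') + (b' - i) := by omega
  rw [e4, e5, mul_comm (fE H p c (b - i)), mul_comm (fE H p c (b' - i))] at s2
  exact s1.trans s2

private lemma G1 {i a b : ℕ} (h1 : a < i) (h2 : i < b) :
    fE H p c (b - i) ≤ fE H p c (i - a) * fE H p c (b - i) / fE H p c (b - a) := by
  rw [le_div_iff₀ (fE_pos hp1 hc1 _)]
  have h := fE_anti (H := H) (p := p) hH2 hc1 (d := i - a) (d' := b - a) (by omega) (by omega)
  have h3 := mul_le_mul_of_nonneg_left h (fE_pos (H := H) hp1 hc1 (b - i)).le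
  linear_combination h3

private lemma G2 {i a b : ℕ} (h1 : a < i) (h2 : i < b) :
    fE H p c (i - a) ≤ fE H p c (i - a) * fE H p c (b - i) / fE H p c (b - a) := by
  rw [le_div_iff₀ (fE_pos hp1 hc1 _)]
  have h := fE_anti (H := H) (p := p) hH2 hc1 (d := b - i) (d' := b - a) (by omega) (by omega)
  have h3 := mul_le_mul_of_nonneg_left h (fE_pos (H := H) hp1 hc1 (i - a)).le
  linear_combination h3

private lemma Rnb_mono (i : ℕ) (bo bo' ao ao' : Option ℕ)
    (hb : ∀ a, bo = some a → a < i ∧ ∃ a', bo' = some a' ∧ a ≤ a')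
    (hb' : ∀ a', bo' = some a' → a' < i)
    (ha : ∀ b, ao = some b → i < b ∧ ∃ b', ao' = some b' ∧ b' ≤ b)
    (ha' : ∀ b', ao' = some b' → i < b') :
    Rnb H p c i bo ao ≤ Rnb H p c i bo' ao' := by
  cases bo with
  | none =>
    cases ao with
    | none =>
      cases bo' with
      | none =>
        cases ao' with
        | none => exact le_refl _
        | some b' => exact p_le_fE hc1 _
      | some a' =>
        cases ao' with
        | none => exact p_le_fE hc1 _
        | some b' =>
          exact (p_le_fE hc1 _).trans (G1 hH2 hp1 hc1 (hb' a' rfl) (ha' b' rfl))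
    | some b =>
      obtain ⟨hib, b', hb'eq, hbb'⟩ := ha b rfl
      rw [hb'eq]
      have hib' : i < b' := ha' b' hb'eq
      have hmon : fE H p c (b - i) ≤ fE H p c (b' - i) :=
        fE_anti (H := H) (p := p) hH2 hc1 (by omega) (by omega)
      cases bo' with
      | none => exact hmon
      | some a' => exact hmon.trans (G1 hH2 hp1 hc1 (hb' a' rfl) hib')
  | some a =>
    obtain ⟨hai, a', ha'eq, haa'⟩ := hb a rfl
    rw [ha'eq]
    have hai' : a' < i := hb' a' ha'eq
    cases ao with
    | none =>
      have hmon : fE H p c (i - a) ≤ fE H p c (i - a') :=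
        fE_anti (H := H) (p := p) hH2 hc1 (by omega) (by omega)
      cases ao' with
      | none => exact hmon
      | some b' => exact hmon.trans (G2 hH2 hp1 hc1 hai' (ha' b' rfl))
    | some b =>
      obtain ⟨hib, b', hb'eq, hbb'⟩ := ha b rfl
      rw [hb'eq]
      exact pair_mono_full hH2 hp1 hc1 haa' hai' (ha' b' hb'eq) hbb'
end

theorem stmt_7 (H p c : ℝ) (hH : 0 < H ∧ H < 1) (hp : 0 < p ∧ p < 1)
    (hc : 0 < c ∧ c < 1) (A A' : Finset ℕ) (hAA' : A ⊆ A') (i : ℕ) (hi : i ∉ A') :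
    Lop H p c (A ∪ {i}) / Lop H p c A ≤ Lop H p c (A' ∪ {i}) / Lop H p c A' := by
  obtain ⟨hH1, hH2⟩ := hH
  obtain ⟨hp1, -⟩ := hp
  obtain ⟨hc1, -⟩ := hc
  have hiA : i ∉ A := fun h => hi (hAA' h)
  rw [ratio_eq hp1 hc1 A i hiA, ratio_eq hp1 hc1 A' i hi]
  apply Rnb_mono hH2 hp1 hc1 i
  · intro a h
    have haA : a ∈ A.filter (· < i) := Finset.mem_of_max h
    have hai : a < i := (Finset.mem_filter.1 haA).2
    have haA' : a ∈ A'.filter (· < i) :=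
      Finset.mem_filter.2 ⟨hAA' (Finset.mem_filter.1 haA).1, hai⟩
    have hne : (A'.filter (· < i)).Nonempty := ⟨a, haA'⟩
    exact ⟨hai, (A'.filter (· < i)).max' hne, (Finset.coe_max' hne).symm,
      Finset.le_max' _ _ haA'⟩
  · intro a' h
    exact (Finset.mem_filter.1 (Finset.mem_of_max h)).2
  · intro b h
    have hbA : b ∈ A.filter (i < ·) := Finset.mem_of_min h
    have hib : i < b := (Finset.mem_filter.1 hbA).2
    have hbA' : b ∈ A'.filter (i < ·) :=
      Finset.mem_filter.2 ⟨hAA' (Finset.mem_filter.1 hbA).1, hib⟩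
    have hne : (A'.filter (i < ·)).Nonempty := ⟨b, hbA'⟩
    exact ⟨hib, (A'.filter (i < ·)).min' hne, (Finset.coe_min' hne).symm,
      Finset.min'_le _ _ hbA'⟩
  · intro b' h
    exact (Finset.mem_filter.1 (Finset.mem_of_min h)).2
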